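/- Let $\overline{U}(X) = \left(-\frac{X}{2}+\left(\frac{1}{27}+\frac{X^2}{4}\right)^{1/2}\right)^{1/3}-\left(\frac{X}{2}+\left(\frac{1}{27}+\frac{X^2}{4}\right)^{1/2}\right)^{1/3}$. Then $\overline{U}$ is differentiable and satisfies the steady self-similar Burgers equation $-\frac{1}{2}\overline{U}(X) + \left(\frac{3}{2}X + \overline{U}(X)\right)\overline{U}'(X) = 0$ for all $X \in \mathbb{R}$. -/

import Mathlib

noncomputable def Ubar (X : ℝ) : ℝ :=
  (-X/2 + Real.sqrt (1/27 + X^2/4)) ^ ((1:ℝ)/3)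
    - (X/2 + Real.sqrt (1/27 + X^2/4)) ^ ((1:ℝ)/3)

lemma sfun_pos (X : ℝ) : 0 < Real.sqrt (1/27 + X^2/4) :=
  Real.sqrt_pos.mpr (by positivity)

lemma sq_sfun (X : ℝ) : Real.sqrt (1/27 + X^2/4) ^ 2 = 1/27 + X^2/4 :=
  Real.sq_sqrt (by positivity)

lemma a_pos (X : ℝ) : 0 < -X/2 + Real.sqrt (1/27 + X^2/4) := by
  nlinarith [sq_sfun X, sfun_pos X, sq_nonneg (Real.sqrt (1/27 + X^2/4) + X/2)]

lemma b_pos (X : ℝ) : 0 < X/2 + Real.sqrt (1/27 + X^2/4) := by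
  nlinarith [sq_sfun X, sfun_pos X, sq_nonneg (Real.sqrt (1/27 + X^2/4) - X/2)]

lemma hasDerivAt_Ubar (X : ℝ) :
    HasDerivAt Ubar
      ((-1/2 + (X/2) / (2 * Real.sqrt (1/27 + X^2/4))) * (1/3)
          * ((-X/2 + Real.sqrt (1/27 + X^2/4)) ^ ((1:ℝ)/3 - 1))
        - (1/2 + (X/2) / (2 * Real.sqrt (1/27 + X^2/4))) * (1/3)
          * ((X/2 + Real.sqrt (1/27 + X^2/4)) ^ ((1:ℝ)/3 - 1))) X := by
  have hin : HasDerivAt (fun X : ℝ => 1/27 + X^2/4) (X/2) X := by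
    have := ((hasDerivAt_pow 2 X).div_const 4).const_add (1/27 : ℝ)
    simpa using this.congr_deriv (by ring)
  have hs : HasDerivAt (fun X : ℝ => Real.sqrt (1/27 + X^2/4))
      ((X/2) / (2 * Real.sqrt (1/27 + X^2/4))) X := hin.sqrt (by positivity)
  have ha : HasDerivAt (fun X : ℝ => -X/2 + Real.sqrt (1/27 + X^2/4))
      (-1/2 + (X/2) / (2 * Real.sqrt (1/27 + X^2/4))) X := by
    have h1 : HasDerivAt (fun X : ℝ => -X/2) (-1/2 : ℝ) X := by
      simpa using ((hasDerivAt_id X).neg.div_const 2)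
    exact h1.add hs
  have hb : HasDerivAt (fun X : ℝ => X/2 + Real.sqrt (1/27 + X^2/4))
      (1/2 + (X/2) / (2 * Real.sqrt (1/27 + X^2/4))) X := by
    have h1 : HasDerivAt (fun X : ℝ => X/2) (1/2 : ℝ) X := by
      simpa using ((hasDerivAt_id X).div_const 2)
    exact h1.add hs
  exact (ha.rpow_const (Or.inl (a_pos X).ne')).sub (hb.rpow_const (Or.inl (b_pos X).ne'))

theorem stmt_1 :
    Differentiable ℝ Ubar ∧
      ∀ X : ℝ, -(1/2) * Ubar X + (3/2 * X + Ubar X) * deriv Ubar X = 0 := by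
  constructor
  · exact fun X => (hasDerivAt_Ubar X).differentiableAt
  · intro X
    set s := Real.sqrt (1/27 + X^2/4) with hsdef
    set p := (-X/2 + s) ^ ((1:ℝ)/3) with hpdef
    set q := (X/2 + s) ^ ((1:ℝ)/3) with hqdef
    have hsp : 0 < s := sfun_pos X
    have hap : 0 < -X/2 + s := a_pos X
    have hbp : 0 < X/2 + s := b_pos X
    have hp : 0 < p := Real.rpow_pos_of_pos hap _
    have hq : 0 < q := Real.rpow_pos_of_pos hbp _
    have hp3 : p ^ 3 = -X/2 + s := by
      rw [hpdef, ← Real.rpow_natCast (((-X/2 + s)) ^ ((1:ℝ)/3)) 3,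
        ← Real.rpow_mul hap.le]
      norm_num
    have hq3 : q ^ 3 = X/2 + s := by
      rw [hqdef, ← Real.rpow_natCast (((X/2 + s)) ^ ((1:ℝ)/3)) 3,
        ← Real.rpow_mul hbp.le]
      norm_num
    have hpq : p * q = 1/3 := by
      have hab : (-X/2 + s) * (X/2 + s) = 1/27 := by
        have := sq_sfun X; nlinarith
      rw [hpdef, hqdef, ← Real.mul_rpow hap.le hbp.le, hab]
      have : ((1:ℝ)/27) = (1/3 : ℝ) ^ (3:ℕ) := by norm_num
      rw [this, ← Real.rpow_natCast (1/3 : ℝ) 3, ← Real.rpow_mul (by norm_num)]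
      norm_num
    have hU : Ubar X = p - q := rfl
    have hD : deriv Ubar X =
        (-1/2 + (X/2) / (2 * s)) * (1/3) * ((-X/2 + s) ^ ((1:ℝ)/3 - 1))
          - (1/2 + (X/2) / (2 * s)) * (1/3) * ((X/2 + s) ^ ((1:ℝ)/3 - 1)) :=
      (hasDerivAt_Ubar X).deriv
    have hra : (-X/2 + s) ^ ((1:ℝ)/3 - 1) = p / p ^ 3 := by
      rw [Real.rpow_sub hap, Real.rpow_one, hp3, hpdef]
    have hrb : (X/2 + s) ^ ((1:ℝ)/3 - 1) = q / q ^ 3 := by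
      rw [Real.rpow_sub hbp, Real.rpow_one, hq3, hqdef]
    rw [hU, hD, hra, hrb]
    have hX : X = q ^ 3 - p ^ 3 := by linarith
    have hs2 : s = (p ^ 3 + q ^ 3) / 2 := by linarith
    rw [hX, hs2]
    field_simp
    linear_combination (12*p^2*q^2*(p^2-q^2)) * hpq
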